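/- For n ≥ 3 and α = (a,b) ∈ V_{2^n−2,2}, with α̂ = (b,a): α ∈ W_{2^{n−1}−1,2} if and only if α̂ ∈ 𝕆_α^⊥, the orthogonal complement of 𝕆_α in A_{n+1}. -/

import Mathlib

noncomputable section

/-- The Cayley–Dickson algebra `A n` of dimension `2^n` over `ℝ`:
`A 0 = ℝ` and `A (n+1) = A n × A n`. -/
def CD : ℕ → Type
  | 0 => ℝ
  | n + 1 => CD n × CD n

namespace CD

instance instAddCommGroup : (n : ℕ) → AddCommGroup (CD n)
  | 0 => inferInstanceAs (AddCommGroup ℝ)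
  | n + 1 =>
    letI := instAddCommGroup n
    inferInstanceAs (AddCommGroup (CD n × CD n))

instance instModule : (n : ℕ) → Module ℝ (CD n)
  | 0 => inferInstanceAs (Module ℝ ℝ)
  | n + 1 =>
    letI := instAddCommGroup n
    letI := instModule n
    inferInstanceAs (Module ℝ (CD n × CD n))

/-- Conjugation: `x̄ = x` on `ℝ` and `(x₁,x₂)‾ = (x̄₁, -x₂)`. -/
protected def conj : {n : ℕ} → CD n → CD n
  | 0, x => x
  | _ + 1, x => (CD.conj x.1, -x.2)

/-- Cayley–Dickson multiplication: `(a,b)(x,y) = (ax - ȳb, ya + bx̄)`. -/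
protected def mul : {n : ℕ} → CD n → CD n → CD n
  | 0, x, y => (show ℝ from x) * (show ℝ from y)
  | _ + 1, x, y =>
    (CD.mul x.1 y.1 - CD.mul (CD.conj y.2) x.2,
     CD.mul y.2 x.1 + CD.mul x.2 (CD.conj y.1))

instance instMul (n : ℕ) : Mul (CD n) := ⟨CD.mul⟩

/-- The multiplicative unit `e₀` of `A n`. -/
def e0 : (n : ℕ) → CD n
  | 0 => (1 : ℝ)
  | n + 1 => (e0 n, 0)

/-- The element `ẽ₀ = (0, e₀)` of `A n` (junk value `0` for `n = 0`). -/
def te0 : (n : ℕ) → CD n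
  | 0 => 0
  | n + 1 => (0, e0 n)

/-- The "complexification" `α̃ = (-b, a)` of `α = (a,b)` (junk value `0` for `n = 0`);
note `α̃ = α·ẽ₀`. -/
def tilde : {n : ℕ} → CD n → CD n
  | 0, _ => 0
  | _ + 1, x => (-x.2, x.1)

/-- The standard inner product on `A n ≅ ℝ^{2^n}`. -/
protected def inner : {n : ℕ} → CD n → CD n → ℝ
  | 0, x, y => (show ℝ from x) * (show ℝ from y)
  | _ + 1, x, y => CD.inner x.1 y.1 + CD.inner x.2 y.2

/-- The euclidean norm on `A n`. -/
protected def norm {n : ℕ} (x : CD n) : ℝ := Real.sqrt (CD.inner x x)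

/-- `x` is pure if its trace `t(x) = x + x̄` vanishes. -/
def IsPure {n : ℕ} (x : CD n) : Prop := x + CD.conj x = 0

/-- `x = (a,b)` is doubly pure if both `a` and `b` are pure
(equivalently, both `x` and `x̃` are pure). -/
def IsDoublyPure : {n : ℕ} → CD n → Prop
  | 0, x => x = 0
  | _ + 1, x => IsPure x.1 ∧ IsPure x.2

/-- The associator `(x,y,z) = (xy)z - x(yz)`. -/
def assoc {n : ℕ} (x y z : CD n) : CD n := (x * y) * z - x * (y * z)

/-- The subspace `ℍ_a`: the real span of `{e₀, ã, a, ẽ₀}`. -/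
def Ha {n : ℕ} (a : CD n) : Submodule ℝ (CD n) :=
  Submodule.span ℝ {e0 n, tilde a, a, te0 n}

/-- The orthogonal complement `ℍ_a^⊥` of `ℍ_a` in `A n`. -/
def HaPerp {n : ℕ} (a : CD n) : Set (CD n) :=
  {x | ∀ y ∈ Ha a, CD.inner x y = 0}

/-- The element `ε = (ẽ₀, 0)` of `A (n+1)`. -/
def eps (n : ℕ) : CD (n + 1) := (te0 n, 0)

/-- `α̂ = (b,a)` for `α = (a,b) ∈ A (n+1)`. -/
def hat {n : ℕ} (x : CD (n + 1)) : CD (n + 1) := (x.2, x.1)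

/-- The element `(a, b)` of `A (n+1) = A n × A n`. -/
def pair {n : ℕ} (a b : CD n) : CD (n + 1) := (a, b)

lemma pair_fst {n} (a b : CD n) : (pair a b).1 = a := rfl
lemma neg_pair {n} (a b : CD n) : -(pair a b) = pair (-a) (-b) := rfl
lemma add_pair {n} (a b c d : CD n) : pair a b + pair c d = pair (a+c) (b+d) := rfl
lemma conj_pair {n} (a b : CD n) : CD.conj (pair a b) = pair (CD.conj a) (-b) := rfl
lemma mul_pair {n} (a b c d : CD n) :
    CD.mul (pair a b) (pair c d) = pair (CD.mul a c - CD.mul (CD.conj d) b) (CD.mul d a + CD.mul b (CD.conj c)) := rfl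
lemma inner_pair {n} (a b c d : CD n) : CD.inner (pair a b) (pair c d) = CD.inner a c + CD.inner b d := rfl
lemma pair_eta {n} (x : CD (n+1)) : pair x.1 x.2 = x := rfl
lemma smul_pair {n} (c : ℝ) (a b : CD n) : c • pair a b = pair (c • a) (c • b) := rfl
lemma zero_pair {n} : (0 : CD (n+1)) = pair 0 0 := rfl

lemma conj_zero : ∀ {n}, CD.conj (0 : CD n) = 0
  | 0 => rfl
  | n+1 => by rw [zero_pair, conj_pair, conj_zero, neg_zero]

lemma conj_e0 : ∀ {n}, CD.conj (e0 n) = e0 n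
  | 0 => rfl
  | n+1 => by show CD.conj (pair (e0 n) 0) = pair (e0 n) 0; rw [conj_pair, conj_e0, neg_zero]

lemma conj_neg : ∀ {n} (x : CD n), CD.conj (-x) = -CD.conj x
  | 0, x => rfl
  | n+1, x => by
    rw [← pair_eta x, neg_pair, conj_pair, conj_pair, conj_neg, neg_pair, neg_neg]

lemma mul_zeros : ∀ {n} (x : CD n), CD.mul 0 x = 0 ∧ CD.mul x 0 = 0
  | 0, x => ⟨zero_mul (show ℝ from x), mul_zero (show ℝ from x)⟩
  | n+1, x => by
    constructor
    · rw [← pair_eta x, zero_pair, mul_pair, (mul_zeros _).1, (mul_zeros _).2,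
        (mul_zeros _).2, (mul_zeros _).1, sub_zero, add_zero]
    · rw [← pair_eta x, zero_pair, mul_pair, conj_zero, (mul_zeros _).2, (mul_zeros _).1,
        (mul_zeros _).1, (mul_zeros _).2, sub_zero, add_zero]

lemma zero_mul' {n} (x : CD n) : CD.mul 0 x = 0 := (mul_zeros x).1
lemma mul_zero' {n} (x : CD n) : CD.mul x 0 = 0 := (mul_zeros x).2

lemma mul_e0s : ∀ {n} (x : CD n), CD.mul (e0 n) x = x ∧ CD.mul x (e0 n) = x
  | 0, x => by
    constructor
    · show (1:ℝ) * (show ℝ from x) = (show ℝ from x); ring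
    · show (show ℝ from x) * (1:ℝ) = (show ℝ from x); ring
  | n+1, x => by
    constructor
    · show CD.mul (pair (e0 n) 0) (pair x.1 x.2) = x
      rw [mul_pair, (mul_e0s _).1, (mul_e0s _).2, mul_zero', zero_mul',
        sub_zero, add_zero, pair_eta]
    · show CD.mul (pair x.1 x.2) (pair (e0 n) 0) = x
      rw [mul_pair, conj_zero, conj_e0, (mul_e0s _).2, (mul_e0s _).2, zero_mul',
        zero_mul', sub_zero, zero_add, pair_eta]

lemma mul_negs : ∀ {n} (x y : CD n), CD.mul (-x) y = -CD.mul x y ∧ CD.mul x (-y) = -CD.mul x y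
  | 0, x, y => ⟨neg_mul (show ℝ from x) (show ℝ from y), mul_neg (show ℝ from x) (show ℝ from y)⟩
  | n+1, x, y => by
    constructor
    · show CD.mul (pair (-x.1) (-x.2)) (pair y.1 y.2) = -CD.mul (pair x.1 x.2) (pair y.1 y.2)
      rw [mul_pair, mul_pair, (mul_negs _ _).1, (mul_negs _ _).2, (mul_negs _ _).2,
        (mul_negs _ _).1, neg_pair]
      congr 1 <;> abel
    · show CD.mul (pair x.1 x.2) (pair (-y.1) (-y.2)) = -CD.mul (pair x.1 x.2) (pair y.1 y.2)
      rw [mul_pair, mul_pair, conj_neg, conj_neg, (mul_negs _ _).1, (mul_negs _ _).1,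
        (mul_negs _ _).2, (mul_negs _ _).2, neg_pair]
      congr 1 <;> abel

lemma inner_add_right : ∀ {n} (x y z : CD n), CD.inner x (y + z) = CD.inner x y + CD.inner x z
  | 0, x, y, z => by
    show (show ℝ from x) * ((show ℝ from y) + (show ℝ from z)) =
      (show ℝ from x) * (show ℝ from y) + (show ℝ from x) * (show ℝ from z)
    ring
  | n+1, x, y, z => by
    show CD.inner (pair x.1 x.2) (pair (y.1+z.1) (y.2+z.2)) = _
    rw [inner_pair, inner_add_right, inner_add_right]
    show _ = CD.inner (pair x.1 x.2) (pair y.1 y.2) + CD.inner (pair x.1 x.2) (pair z.1 z.2)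
    rw [inner_pair, inner_pair]; ring

lemma inner_smul_right : ∀ {n} (c : ℝ) (x y : CD n), CD.inner x (c • y) = c * CD.inner x y
  | 0, c, x, y => by
    show (show ℝ from x) * (c * (show ℝ from y)) = c * ((show ℝ from x) * (show ℝ from y))
    ring
  | n+1, c, x, y => by
    show CD.inner (pair x.1 x.2) (pair (c • y.1) (c • y.2)) = c * CD.inner (pair x.1 x.2) (pair y.1 y.2)
    rw [inner_pair, inner_pair, inner_smul_right, inner_smul_right]; ring

lemma inner_comm : ∀ {n} (x y : CD n), CD.inner x y = CD.inner y x
  | 0, x, y => mul_comm _ _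
  | n+1, x, y => by
    show CD.inner (pair x.1 x.2) (pair y.1 y.2) = CD.inner (pair y.1 y.2) (pair x.1 x.2)
    rw [inner_pair, inner_pair, inner_comm x.1, inner_comm x.2]

lemma inner_zero_right {n} (x : CD n) : CD.inner x 0 = 0 := by
  have := inner_smul_right (0:ℝ) x 0
  rwa [zero_smul, zero_mul] at this

lemma inner_neg_right {n} (x y : CD n) : CD.inner x (-y) = -CD.inner x y := by
  have := inner_smul_right (-1:ℝ) x y
  rwa [neg_one_smul, neg_one_mul] at this

lemma pure_conj {n} {x : CD n} (h : IsPure x) : CD.conj x = -x :=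
  eq_neg_of_add_eq_zero_right h

lemma pure_fst {n} {x : CD (n+1)} (h : IsPure x) : IsPure x.1 := by
  have := congrArg Prod.fst h
  exact this

lemma pure_of_fst {n} {x : CD (n+1)} (h : IsPure x.1) : IsPure x := by
  show pair x.1 x.2 + CD.conj (pair x.1 x.2) = 0
  rw [conj_pair, add_pair, h, add_neg_cancel, zero_pair]

lemma pure_inner_e0 : ∀ {n} {x : CD n}, IsPure x → CD.inner x (e0 n) = 0
  | 0, x, h => by
    have h2 : (show ℝ from x) + (show ℝ from x) = 0 := h
    show (show ℝ from x) * 1 = 0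
    nlinarith
  | n+1, x, h => by
    show CD.inner (pair x.1 x.2) (pair (e0 n) 0) = 0
    rw [inner_pair, pure_inner_e0 (pure_fst h), inner_zero_right, add_zero]

lemma dpure_inner_te0 {n} {x : CD (n+1)} (h : IsDoublyPure x) : CD.inner x (te0 (n+1)) = 0 := by
  show CD.inner (pair x.1 x.2) (pair 0 (e0 n)) = 0
  rw [inner_pair, inner_zero_right, pure_inner_e0 h.2, zero_add]


lemma tilde_pair {n} (a b : CD n) : tilde (pair a b) = pair (-b) a := rfl
lemma te0_succ {n} : te0 (n+1) = pair 0 (e0 n) := rfl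
lemma e0_succ {n} : e0 (n+1) = pair (e0 n) 0 := rfl

lemma conj_te0 {n} : CD.conj (te0 (n+1)) = -te0 (n+1) := by
  rw [te0_succ, conj_pair, conj_zero, neg_pair, neg_zero]

lemma mul_te0 {n} (x : CD (n+1)) : CD.mul x (te0 (n+1)) = tilde x := by
  rw [← pair_eta x, te0_succ, mul_pair, conj_e0, conj_zero, mul_zero', mul_zero',
    (mul_e0s _).1, (mul_e0s _).1, zero_sub, add_zero, tilde_pair]

lemma te0_mul_dpure {n} {x : CD (n+1)} (h : IsDoublyPure x) :
    CD.mul (te0 (n+1)) x = -tilde x := by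
  rw [← pair_eta x, te0_succ, mul_pair, pure_conj h.1, pure_conj h.2, zero_mul',
    (mul_negs _ _).1, (mul_e0s _).2, (mul_e0s _).1, mul_zero', zero_sub, neg_neg,
    zero_add, tilde_pair, neg_pair, neg_neg]

lemma tilde_neg {n} (x : CD (n+1)) : tilde (-x) = -tilde x := by
  rw [← pair_eta x, neg_pair, tilde_pair, tilde_pair, neg_pair, neg_neg]

lemma inner_tilde_self {n} (x : CD (n+1)) : CD.inner x (tilde x) = 0 := by
  rw [← pair_eta x, tilde_pair, inner_pair, inner_neg_right, inner_comm x.1]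
  ring

lemma inner_tilde_swap {n} (x y : CD (n+1)) : CD.inner x (tilde y) = -CD.inner y (tilde x) := by
  rw [← pair_eta x, ← pair_eta y, tilde_pair, tilde_pair, inner_pair, inner_pair,
    inner_neg_right, inner_neg_right, inner_comm x.1, inner_comm x.2]
  ring

/-- inner product with a fixed left argument as a linear map. -/
def innerL {n} (x : CD n) : CD n →ₗ[ℝ] ℝ where
  toFun y := CD.inner x y
  map_add' := inner_add_right x
  map_smul' c y := inner_smul_right c x y

lemma inner_span_zero_iff {n} (x : CD n) (s : Set (CD n)) :
    (∀ y ∈ Submodule.span ℝ s, CD.inner x y = 0) ↔ (∀ y ∈ s, CD.inner x y = 0) := by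
  constructor
  · exact fun h y hy => h y (Submodule.subset_span hy)
  · intro h y hy
    have hle : Submodule.span ℝ s ≤ LinearMap.ker (innerL x) :=
      Submodule.span_le.2 fun z hz => LinearMap.mem_ker.2 (h z hz)
    exact hle hy


lemma tilde_eps {n} : CD.tilde (CD.eps (n+1)) = CD.pair 0 (CD.te0 (n+1)) := by
  rw [show CD.eps (n+1) = CD.pair (CD.te0 (n+1)) 0 from rfl, tilde_pair, neg_zero]

lemma pair_mul_eps {n} (a b : CD (n+1)) :
    CD.pair a b * CD.eps (n+1) = CD.pair (tilde a) (-(tilde b)) := by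
  show CD.mul (pair a b) (pair (te0 (n+1)) 0) = _
  rw [mul_pair, conj_zero, zero_mul', zero_mul', mul_te0, conj_te0, (mul_negs _ _).2,
    mul_te0, sub_zero, zero_add]

lemma teps_mul_pair {n} {a b : CD (n+1)} (ha : IsDoublyPure a) (hb : IsPure b) :
    CD.tilde (CD.eps (n+1)) * CD.pair a b = CD.pair (tilde b) (tilde a) := by
  show CD.mul (tilde (CD.eps (n+1))) (pair a b) = _
  rw [tilde_eps, mul_pair, zero_mul', mul_zero', pure_conj hb, pure_conj (pure_of_fst ha.1),
    (mul_negs _ _).1, mul_te0, (mul_negs _ _).2, te0_mul_dpure ha, neg_neg,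
    zero_sub, neg_neg, zero_add]

lemma hat_pair {n} (a b : CD n) : CD.hat (CD.pair a b) = CD.pair b a := rfl

end CD

/-- The 8 generating vectors of `𝕆_α ⊆ A (n+1)`. -/
def ovec {n : ℕ} (α : CD (n + 1)) : Fin 8 → CD (n + 1) :=
  ![CD.e0 (n + 1), CD.tilde (CD.eps n), CD.eps n, CD.te0 (n + 1),
    CD.tilde α, α * CD.eps n, CD.tilde (CD.eps n) * α, α]

/-- The subspace `𝕆_α`: the real span of `{e₀, ε̃, ε, ẽ₀, α̃, αε, ε̃α, α}`. -/
def Oa {n : ℕ} (α : CD (n + 1)) : Submodule ℝ (CD (n + 1)) :=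
  Submodule.span ℝ (Set.range (ovec α))

/-- For `n ≥ 3` and `α = (a,b) ∈ V_{2^n-2,2}`, with `α̂ = (b,a)`:
`α ∈ W_{2^{n-1}-1,2}` (i.e. `b ∈ ℍ_a^⊥`) if and only if `α̂ ∈ 𝕆_α^⊥`. -/
theorem statement12 (n : ℕ) (hn : 3 ≤ n) (a b : CD n)
    (ha : CD.IsDoublyPure a) (hb : CD.IsDoublyPure b)
    (hna : CD.norm a = 1) (hnb : CD.norm b = 1) (hab : CD.inner a b = 0) :
    b ∈ CD.HaPerp a ↔
      ∀ y ∈ Oa (CD.pair a b), CD.inner (CD.hat ((CD.pair a b))) y = 0 := by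
  obtain ⟨m, rfl⟩ : ∃ m, n = m + 1 := ⟨n - 1, by omega⟩
  have hpa : CD.IsPure a := CD.pure_of_fst ha.1
  have hpb : CD.IsPure b := CD.pure_of_fst hb.1
  have hIa : CD.inner a a = 1 := Real.sqrt_eq_one.mp hna
  have hIb : CD.inner b b = 1 := Real.sqrt_eq_one.mp hnb
  have hba : CD.inner b a = 0 := by rw [CD.inner_comm]; exact hab
  have g0 : CD.inner (CD.pair b a) (CD.e0 (m+1+1)) = 0 := by
    rw [CD.e0_succ, CD.inner_pair, CD.pure_inner_e0 hpb, CD.inner_zero_right, add_zero]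
  have g1 : CD.inner (CD.pair b a) (CD.tilde (CD.eps (m+1))) = 0 := by
    rw [CD.tilde_eps, CD.inner_pair, CD.inner_zero_right, CD.dpure_inner_te0 ha, add_zero]
  have g2 : CD.inner (CD.pair b a) (CD.eps (m+1)) = 0 := by
    rw [show CD.eps (m+1) = CD.pair (CD.te0 (m+1)) 0 from rfl, CD.inner_pair,
      CD.dpure_inner_te0 hb, CD.inner_zero_right, add_zero]
  have g3 : CD.inner (CD.pair b a) (CD.te0 (m+1+1)) = 0 := by
    rw [CD.te0_succ, CD.inner_pair, CD.inner_zero_right, CD.pure_inner_e0 hpa, add_zero]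
  have g4 : CD.inner (CD.pair b a) (CD.tilde (CD.pair a b)) = 0 := by
    rw [CD.tilde_pair, CD.inner_pair, CD.inner_neg_right, hIa, hIb]; ring
  have g5 : CD.inner (CD.pair b a) (CD.pair a b * CD.eps (m+1)) =
      2 * CD.inner b (CD.tilde a) := by
    rw [CD.pair_mul_eps, CD.inner_pair, CD.inner_neg_right, CD.inner_tilde_swap a b]; ring
  have g6 : CD.inner (CD.pair b a) (CD.tilde (CD.eps (m+1)) * CD.pair a b) = 0 := by
    rw [CD.teps_mul_pair ha hpb, CD.inner_pair, CD.inner_tilde_self, CD.inner_tilde_self,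
      add_zero]
  have g7 : CD.inner (CD.pair b a) (CD.pair a b) = 0 := by
    rw [CD.inner_pair, hba, hab, add_zero]
  constructor
  · intro h y hy
    have hkey : CD.inner b (CD.tilde a) = 0 :=
      h (CD.tilde a) (Submodule.subset_span (by simp))
    refine (CD.inner_span_zero_iff _ _).2 ?_ y hy
    rintro z ⟨i, rfl⟩
    fin_cases i
    · exact g0
    · exact g1
    · exact g2
    · exact g3
    · exact g4
    · rw [show CD.hat (CD.pair a b) = CD.pair b a from rfl]
      show CD.inner (CD.pair b a) (CD.pair a b * CD.eps (m+1)) = 0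
      rw [g5, hkey]; ring
    · exact g6
    · exact g7
  · intro h
    have h5 := h (ovec (CD.pair a b) 5) (Submodule.subset_span (Set.mem_range_self 5))
    have hkey : CD.inner b (CD.tilde a) = 0 := by
      have : CD.inner (CD.pair b a) (CD.pair a b * CD.eps (m+1)) = 0 := h5
      rw [g5] at this; linarith
    intro y hy
    refine (CD.inner_span_zero_iff b {CD.e0 (m+1), CD.tilde a, a, CD.te0 (m+1)}).2 ?_ y hy
    intro z hz
    simp only [Set.mem_insert_iff, Set.mem_singleton_iff] at hz
    rcases hz with rfl | rfl | rfl | rfl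
    · exact CD.pure_inner_e0 hpb
    · exact hkey
    · exact hba
    · exact CD.dpure_inner_te0 hb
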